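/- For every integer r ≥ 1, one has r · C(r, ⌊r/2⌋) ≥ 2^{r-1} + Σ_{i=⌈(r+1)/2⌉}^{r} C(r,i) - 1, and equality holds only when r = 1 or r = 2. -/

import Mathlib

open Finset

lemma sumA (r : ℕ) (hr : 1 ≤ r) :
    2 ^ r ≤ (r - 1) * Nat.choose r (r / 2) + 2 := by
  have h1 : (∑ m ∈ Ico 0 (r + 1), r.choose m) = 2 ^ r := by
    rw [← range_eq_Ico]; exact Nat.sum_range_choose r
  have h2 : (∑ m ∈ Ico 0 1, r.choose m) + (∑ m ∈ Ico 1 r, r.choose m)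
      = ∑ m ∈ Ico 0 r, r.choose m := sum_Ico_consecutive _ (by omega) (by omega)
  have h3 : (∑ m ∈ Ico 0 r, r.choose m) + (∑ m ∈ Ico r (r+1), r.choose m)
      = ∑ m ∈ Ico 0 (r+1), r.choose m := sum_Ico_consecutive _ (by omega) (by omega)
  have h4 : (∑ m ∈ Ico 1 r, r.choose m) ≤ (r - 1) * Nat.choose r (r / 2) := by
    calc (∑ m ∈ Ico 1 r, r.choose m)
        ≤ ∑ _m ∈ Ico 1 r, Nat.choose r (r / 2) :=
          sum_le_sum fun i _ => Nat.choose_le_middle i r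
      _ = (r - 1) * Nat.choose r (r / 2) := by
          rw [sum_const, Nat.card_Ico, smul_eq_mul]
  have e0 : (∑ m ∈ Ico 0 1, r.choose m) = 1 := by simp
  have e1 : (∑ m ∈ Ico r (r+1), r.choose m) = 1 := by simp
  omega

lemma oddS (n : ℕ) :
    (∑ i ∈ Icc (n + 1) (2 * n + 1), (2 * n + 1).choose i) = 4 ^ n := by
  have h1 : (∑ i ∈ Ico 0 (n + 1), (2 * n + 1).choose i) = 4 ^ n := by
    rw [← range_eq_Ico]; exact Nat.sum_range_choose_halfway n
  have h2 : (∑ i ∈ Ico 0 (2 * n + 2), (2 * n + 1).choose i) = 2 ^ (2 * n + 1) := by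
    rw [← range_eq_Ico]; exact Nat.sum_range_choose (2 * n + 1)
  have h3 : (∑ i ∈ Ico 0 (n+1), (2*n+1).choose i) + (∑ i ∈ Ico (n+1) (2*n+2), (2*n+1).choose i)
      = ∑ i ∈ Ico 0 (2*n+2), (2*n+1).choose i := sum_Ico_consecutive _ (by omega) (by omega)
  have h4 : (∑ i ∈ Icc (n + 1) (2 * n + 1), (2 * n + 1).choose i)
      = ∑ i ∈ Ico (n+1) (2*n+2), (2*n+1).choose i := by
    rw [← Finset.Ico_add_one_right_eq_Icc]; rfl
  have hp : 2 ^ (2 * n + 1) = 2 * 4 ^ n := by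
    rw [pow_succ', pow_mul]; norm_num
  omega

lemma evenS (n : ℕ) :
    2 * (∑ i ∈ Icc n (2 * n), (2 * n).choose i) = 2 ^ (2 * n) + (2 * n).choose n := by
  have hrefl : (∑ j ∈ Ico 0 n, (2*n).choose j)
      = ∑ j ∈ Ico (n+1) (2*n+1), (2*n).choose j := by
    have h := sum_Ico_reflect (fun j => (2*n).choose j) 0 (m := n) (n := 2*n) (by omega)
    have h' : (∑ j ∈ Ico 0 n, (2*n).choose (2*n - j)) = ∑ j ∈ Ico 0 n, (2*n).choose j := by
      apply sum_congr rfl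
      intro j hj
      simp only [mem_Ico] at hj
      rw [Nat.choose_symm (by omega)]
    rw [← h', h]
    have e1 : 2*n+1-n = n+1 := by omega
    have e2 : 2*n+1-0 = 2*n+1 := by omega
    rw [e1, e2]
  have h2 : (∑ i ∈ Ico 0 (2 * n + 1), (2 * n).choose i) = 2 ^ (2 * n) := by
    rw [← range_eq_Ico]; exact Nat.sum_range_choose (2 * n)
  have h3 : (∑ i ∈ Ico 0 n, (2*n).choose i) + (∑ i ∈ Ico n (2*n+1), (2*n).choose i)
      = ∑ i ∈ Ico 0 (2*n+1), (2*n).choose i := sum_Ico_consecutive _ (by omega) (by omega)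
  have h4 : (∑ i ∈ Ico n (n+1), (2*n).choose i) + (∑ i ∈ Ico (n+1) (2*n+1), (2*n).choose i)
      = ∑ i ∈ Ico n (2*n+1), (2*n).choose i := sum_Ico_consecutive _ (by omega) (by omega)
  have h5 : (∑ i ∈ Ico n (n+1), (2*n).choose i) = (2*n).choose n := by simp
  have h6 : (∑ i ∈ Icc n (2 * n), (2 * n).choose i)
      = ∑ i ∈ Ico n (2*n+1), (2*n).choose i := by
    rw [← Finset.Ico_add_one_right_eq_Icc]
  omega

lemma key (r : ℕ) (hr : 3 ≤ r) :
    2 ^ (r - 1) + (∑ i ∈ Icc ((r + 1) / 2) r, Nat.choose r i)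
      ≤ r * Nat.choose r (r / 2) := by
  have hC : r ≤ Nat.choose r (r / 2) := by
    have := Nat.choose_le_middle 1 r
    rwa [Nat.choose_one_right] at this
  have hA := sumA r (by omega)
  rcases Nat.even_or_odd r with ⟨n, hn⟩ | ⟨n, hn⟩
  · have hn' : r = 2 * n := by omega
    subst hn'
    have hn2 : 2 ≤ n := by omega
    rw [show (2*n+1)/2 = n from by omega, show (2*n)/2 = n from by omega] at *
    have hS := evenS n
    have hp : 2 ^ (2 * n) = 2 * 2 ^ (2 * n - 1) := by
      rw [← pow_succ']
      congr 1
      omega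
    have h5 : (2*n - 1) * (2*n).choose n + (2*n).choose n = 2 * n * (2*n).choose n := by
      rw [← Nat.succ_mul, show (2*n-1).succ = 2*n from by omega]
    have hC4 : 4 ≤ (2*n).choose n := by omega
    nlinarith [hS, hA, hp, h5, hC4]
  · subst hn
    have hn1 : 1 ≤ n := by omega
    rw [show (2*n+1+1)/2 = n+1 from by omega, show (2*n+1)/2 = n from by omega] at *
    have hS := oddS n
    have hp : 2 ^ (2 * n + 1 - 1) = 4 ^ n := by
      rw [show 2*n+1-1 = 2*n from by omega, pow_mul]; norm_num
    have hp2 : 2 ^ (2 * n + 1) = 2 * 4 ^ n := by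
      rw [pow_succ', pow_mul]; norm_num
    have h5 : (2*n+1 - 1) * (2*n+1).choose n + (2*n+1).choose n
        = (2*n+1) * (2*n+1).choose n := by
      rw [← Nat.succ_mul, show (2*n+1-1).succ = 2*n+1 from by omega]
    have hC3 : 3 ≤ (2*n+1).choose n := by omega
    nlinarith [hS, hA, hp, hp2, h5, hC3]

theorem central_binom_sum_ineq (r : ℕ) (hr : 1 ≤ r) :
    2 ^ (r - 1) + (∑ i ∈ Finset.Icc ((r + 1) / 2) r, Nat.choose r i) - 1
      ≤ r * Nat.choose r (r / 2) ∧
    (r * Nat.choose r (r / 2)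
        = 2 ^ (r - 1) + (∑ i ∈ Finset.Icc ((r + 1) / 2) r, Nat.choose r i) - 1 →
      r = 1 ∨ r = 2) := by
  match r, hr with
  | 1, _ => exact ⟨by decide, fun _ => Or.inl rfl⟩
  | 2, _ => exact ⟨by decide, fun _ => Or.inr rfl⟩
  | (r + 3), _ =>
    have h := key (r + 3) (by omega)
    have hpos : 1 ≤ 2 ^ (r + 3 - 1) := Nat.one_le_two_pow
    exact ⟨by omega, fun he => by omega⟩
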